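/- Suppose the market model S ∈ 𝒮 satisfies NA(𝒫,S). Then the cone 𝒞(S) := {X ∈ L^∞_c : ∃H ∈ ℝ^d, X ≼ [HΔS]_c} is closed under 𝒫-quasi-sure convergence of sequences: if X_n ∈ 𝒞(S) converge 𝒫-q.s. to X ∈ L^∞_c, then X ∈ 𝒞(S). -/

import Mathlib

open MeasureTheory Filter Set

variable {Ω : Type*} [MeasurableSpace Ω]

/-- Quasi-sure equality with respect to a family of measures. -/
def QSEq (𝔓 : Set (Measure Ω)) (x y : Ω → ℝ) : Prop := ∀ P ∈ 𝔓, x =ᵐ[P] y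

def qsSetoid (𝔓 : Set (Measure Ω)) : Setoid (Ω → ℝ) where
  r := QSEq 𝔓
  iseqv := ⟨fun _ _ _ => EventuallyEq.refl _ _,
    fun h P hP => (h P hP).symm,
    fun h1 h2 P hP => (h1 P hP).trans (h2 P hP)⟩

/-- The robust space `L⁰_c`. -/
def L0c (𝔓 : Set (Measure Ω)) := Quotient (qsSetoid 𝔓)

def aeSetoid (Q : Measure Ω) : Setoid (Ω → ℝ) where
  r x y := x =ᵐ[Q] y
  iseqv := ⟨fun _ => EventuallyEq.refl _ _, EventuallyEq.symm, EventuallyEq.trans⟩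

/-- The space `L⁰_Q` for a single measure. -/
def L0 (Q : Measure Ω) := Quotient (aeSetoid Q)

/-- Probability measures dominated by the family `𝔓` (vanishing on `𝔓`-polar sets). -/
def Pc (𝔓 : Set (Measure Ω)) : Set (Measure Ω) :=
  {Q | IsProbabilityMeasure Q ∧ ∀ N : Set Ω, (∀ P ∈ 𝔓, P N = 0) → Q N = 0}

abbrev PcM (𝔓 : Set (Measure Ω)) := {Q : Measure Ω // Q ∈ Pc 𝔓}

theorem QSEq.aeEq {𝔓 : Set (Measure Ω)} (Q : PcM 𝔓) {x y : Ω → ℝ}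
    (h : QSEq 𝔓 x y) : x =ᵐ[Q.1] y :=
  ae_iff.2 (Q.2.2 _ fun P hP => ae_iff.1 (h P hP))

/-- The map `j_Q : L⁰_c → L⁰_Q`. -/
def jQ {𝔓 : Set (Measure Ω)} (Q : PcM 𝔓) : L0c 𝔓 → L0 Q.1 :=
  Quotient.lift (fun x => Quotient.mk (aeSetoid Q.1) x)
    (fun _ _ h => Quotient.sound (h.aeEq Q))

/-- The `𝔓`-quasi-sure order on `L⁰_c`. -/
def qsLe {𝔓 : Set (Measure Ω)} : L0c 𝔓 → L0c 𝔓 → Prop :=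
  Quotient.lift₂ (fun x y => ∀ P ∈ 𝔓, x ≤ᵐ[P] y)
    (fun _ _ _ _ ha hb => propext
      ⟨fun h P hP => ((ha P hP).symm.le.trans (h P hP)).trans (hb P hP).le,
       fun h P hP => ((ha P hP).le.trans (h P hP)).trans (hb P hP).symm.le⟩)

/-- The `Q`-a.s. order on `L⁰_c`, for `Q ∈ 𝔓_c(Ω)`. -/
def qLe {𝔓 : Set (Measure Ω)} (Q : PcM 𝔓) : L0c 𝔓 → L0c 𝔓 → Prop :=
  Quotient.lift₂ (fun x y => x ≤ᵐ[Q.1] y)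
    (fun _ _ _ _ ha hb => propext
      ⟨fun h => (((ha.aeEq Q).symm.le.trans h)).trans (hb.aeEq Q).le,
       fun h => (((ha.aeEq Q).le.trans h)).trans (hb.aeEq Q).symm.le⟩)

def L0c.add {𝔓 : Set (Measure Ω)} : L0c 𝔓 → L0c 𝔓 → L0c 𝔓 :=
  Quotient.map₂ (fun x y ω => x ω + y ω)
    (fun _ _ ha _ _ hb P hP => by filter_upwards [ha P hP, hb P hP] with ω h1 h2; simp [h1, h2])

def L0c.const (𝔓 : Set (Measure Ω)) (m : ℝ) : L0c 𝔓 := Quotient.mk (qsSetoid 𝔓) (fun _ => m)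

def L0c.smul {𝔓 : Set (Measure Ω)} (c : ℝ) : L0c 𝔓 → L0c 𝔓 :=
  Quotient.map (fun x ω => c * x ω)
    (fun _ _ ha P hP => by filter_upwards [ha P hP] with ω h1; simp [h1])

def L0c.abs {𝔓 : Set (Measure Ω)} : L0c 𝔓 → L0c 𝔓 :=
  Quotient.map (fun x ω => |x ω|)
    (fun _ _ ha P hP => by filter_upwards [ha P hP] with ω h1; simp [h1])

/-- Multiplication by the indicator of a set `A`. -/
noncomputable def L0c.mulInd {𝔓 : Set (Measure Ω)} (A : Set Ω) : L0c 𝔓 → L0c 𝔓 :=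
  Quotient.map (fun x => A.indicator x)
    (fun _ _ ha P hP => by
      filter_upwards [ha P hP] with ω h1
      by_cases h : ω ∈ A <;> simp [Set.indicator, h, h1])

/-- The class of the indicator function of `A`. -/
noncomputable def L0c.ind (𝔓 : Set (Measure Ω)) (A : Set Ω) : L0c 𝔓 :=
  Quotient.mk (qsSetoid 𝔓) (A.indicator fun _ => (1 : ℝ))

/-- The bounded elements: `L^∞_c`. -/
def Linftyc (𝔓 : Set (Measure Ω)) : Set (L0c 𝔓) :=
  {X | ∃ m : ℝ, 0 < m ∧ qsLe X.abs (L0c.const 𝔓 m)}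

/-- Expectation under `R ∈ 𝔓_c(Ω)`. -/
noncomputable def expct {𝔓 : Set (Measure Ω)} (R : PcM 𝔓) : L0c 𝔓 → ℝ :=
  Quotient.lift (fun x => MeasureTheory.integral R.1 (fun ω => x ω))
    (fun _ _ h => integral_congr_ae (h.aeEq R))

/-- `𝒬` is a reduction set for `𝒞 ⊆ 𝒳`. -/
def IsReductionSet (𝔓 : Set (Measure Ω)) (𝒳 𝒞 : Set (L0c 𝔓)) (𝒬 : Set (PcM 𝔓)) : Prop :=
  𝒬.Nonempty ∧ ∀ X ∈ 𝒳, (X ∈ 𝒞 ↔ ∀ Q ∈ 𝒬, jQ Q X ∈ jQ Q '' 𝒞)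

/-- `𝒞 ⊆ 𝒳` is `𝔓`-sensitive. -/
def PSensitive (𝔓 : Set (Measure Ω)) (𝒳 𝒞 : Set (L0c 𝔓)) : Prop :=
  𝒞 = ∅ ∨ ∀ X ∈ 𝒳, (X ∈ 𝒞 ↔ ∀ Q : PcM 𝔓, jQ Q X ∈ jQ Q '' 𝒞)

/-- A one-period market model of dimension `d`: initial prices `S0 ∈ ℝ^d` and a
bounded, measurable, nonnegative terminal price vector `S1`. -/
structure MarketModel (Ω : Type*) [MeasurableSpace Ω] (d : ℕ) where
  S0 : Fin d → ℝ
  S1 : Ω → Fin d → ℝ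
  meas : Measurable S1
  bdd : ∃ M : ℝ, ∀ ω i, |S1 ω i| ≤ M
  nonneg0 : ∀ i, 0 ≤ S0 i
  nonneg1 : ∀ ω i, 0 ≤ S1 ω i

/-- The gain `H ΔS = ∑ i, H i (S1 i − S0 i)` of a strategy `H ∈ ℝ^d`. -/
def payoff {Ω : Type*} [MeasurableSpace Ω] {d : ℕ} (S : MarketModel Ω d)
    (H : Fin d → ℝ) (ω : Ω) : ℝ :=
  ∑ i, H i * (S.S1 ω i - S.S0 i)

/-- The class `[H ΔS]_c` in `L⁰_c`. -/
def payoffC {Ω : Type*} [MeasurableSpace Ω] (𝔓 : Set (Measure Ω)) {d : ℕ}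
    (S : MarketModel Ω d) (H : Fin d → ℝ) : L0c 𝔓 :=
  Quotient.mk (qsSetoid 𝔓) (payoff S H)

/-- The robust no-arbitrage condition `NA(𝔓, S)`. -/
def NArob {Ω : Type*} [MeasurableSpace Ω] (𝔓 : Set (Measure Ω)) {d : ℕ}
    (S : MarketModel Ω d) : Prop :=
  ∀ H : Fin d → ℝ, (∀ P ∈ 𝔓, ∀ᵐ ω ∂P, 0 ≤ payoff S H ω) →
    ∀ P ∈ 𝔓, ∀ᵐ ω ∂P, payoff S H ω = 0

/-- The no-arbitrage condition `NA(P, S)` under a single probability `P`. -/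
def NAone {Ω : Type*} [MeasurableSpace Ω] (P : Measure Ω) {d : ℕ}
    (S : MarketModel Ω d) : Prop :=
  ∀ H : Fin d → ℝ, (∀ᵐ ω ∂P, 0 ≤ payoff S H ω) → ∀ᵐ ω ∂P, payoff S H ω = 0

/-- The `𝔓`-superhedging functional, valued in `[-∞,∞]`. -/
noncomputable def piE {Ω : Type*} [MeasurableSpace Ω] (𝔓 : Set (Measure Ω)) {d : ℕ}
    (S : MarketModel Ω d) (X : L0c 𝔓) : EReal :=
  sInf ((fun r : ℝ => (r : EReal)) ''
    {r : ℝ | ∃ H : Fin d → ℝ, qsLe X ((L0c.const 𝔓 r).add (payoffC 𝔓 S H))})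

/-- The superhedgeable cone `𝒞(S) ⊆ L^∞_c`. -/
def coneC {Ω : Type*} [MeasurableSpace Ω] (𝔓 : Set (Measure Ω)) {d : ℕ}
    (S : MarketModel Ω d) : Set (L0c 𝔓) :=
  {X | X ∈ Linftyc 𝔓 ∧ ∃ H : Fin d → ℝ, qsLe X (payoffC 𝔓 S H)}

section ConeAux
variable {Ω : Type*} [MeasurableSpace Ω] {d : ℕ}

lemma payoff_cont' (S : MarketModel Ω d) (ω : Ω) :
    Continuous fun H : Fin d → ℝ => payoff S H ω := by
  unfold payoff; continuity

lemma payoff_smul' (S : MarketModel Ω d) (c : ℝ) (H : Fin d → ℝ) (ω : Ω) :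
    payoff S (c • H) ω = c * payoff S H ω := by
  simp [payoff, Finset.mul_sum, mul_assoc]

lemma payoff_sub_smul' (S : MarketModel Ω d) (H G : Fin d → ℝ) (t : ℝ) (ω : Ω) :
    payoff S (H - t • G) ω = payoff S H ω - t * payoff S G ω := by
  simp only [payoff, Pi.sub_apply, Pi.smul_apply, smul_eq_mul, Finset.mul_sum,
    ← Finset.sum_sub_distrib]
  exact Finset.sum_congr rfl fun i _ => by ring

lemma exists_minOn_sq' {A : Set (Fin d → ℝ)} (hne : A.Nonempty) (hcl : IsClosed A) :
    ∃ H₀ ∈ A, ∀ H ∈ A, (∑ i, (H₀ i)^2) ≤ ∑ i, (H i)^2 := by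
  obtain ⟨H₁, hH₁⟩ := hne
  set φ : (Fin d → ℝ) → ℝ := fun H => ∑ i, (H i)^2 with hφ
  have hφc : Continuous φ := by unfold φ; continuity
  set K := A ∩ {H | φ H ≤ φ H₁} with hK
  have hKcl : IsClosed K := hcl.inter (isClosed_le hφc continuous_const)
  have hKsub : K ⊆ Metric.closedBall 0 (Real.sqrt (φ H₁)) := by
    intro H hH
    rw [Metric.mem_closedBall, dist_zero_right]
    rw [pi_norm_le_iff_of_nonneg (Real.sqrt_nonneg _)]
    intro i
    have h1 : (H i)^2 ≤ φ H₁ :=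
      le_trans (Finset.single_le_sum (fun j _ => sq_nonneg (H j)) (Finset.mem_univ i)) hH.2
    calc ‖H i‖ = Real.sqrt ((H i)^2) := by rw [Real.sqrt_sq_eq_abs]; rfl
    _ ≤ Real.sqrt (φ H₁) := Real.sqrt_le_sqrt h1
  have hKcp : IsCompact K := (isCompact_closedBall _ _).of_isClosed_subset hKcl hKsub
  obtain ⟨H₀, hH₀K, hmin⟩ := hKcp.exists_isMinOn ⟨H₁, Set.mem_inter hH₁ (le_refl (φ H₁))⟩ hφc.continuousOn
  refine ⟨H₀, hH₀K.1, fun H hH => ?_⟩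
  rcases le_total (φ H) (φ H₁) with h | h
  · exact hmin (Set.mem_inter hH h)
  · exact le_trans (hmin (Set.mem_inter hH₁ (le_refl (φ H₁)))) h

lemma setA_closed' (𝔓 : Set (Measure Ω)) (S : MarketModel Ω d) (f : Ω → ℝ) :
    IsClosed {H : Fin d → ℝ | ∀ P ∈ 𝔓, f ≤ᵐ[P] payoff S H} := by
  apply IsSeqClosed.isClosed
  intro Hs H hmemA htend P hP
  have h1 : ∀ᵐ ω ∂P, ∀ k, f ω ≤ payoff S (Hs k) ω := ae_all_iff.2 fun k => hmemA k P hP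
  filter_upwards [h1] with ω hω
  have h2 : Tendsto (fun k => payoff S (Hs k) ω) atTop (nhds (payoff S H ω)) :=
    ((payoff_cont' S ω).tendsto H).comp htend
  exact ge_of_tendsto' h2 hω

end ConeAux

theorem coneC_closed_qs {Ω : Type*} [MeasurableSpace Ω]
    (𝔓 : Set (Measure Ω)) (h𝔓 : 𝔓.Nonempty) (hprob : ∀ P ∈ 𝔓, IsProbabilityMeasure P)
    (d : ℕ) (S : MarketModel Ω d) (hNA : NArob 𝔓 S)
    (x : ℕ → Ω → ℝ) (xl : Ω → ℝ)
    (hmem : ∀ n, Quotient.mk (qsSetoid 𝔓) (x n) ∈ coneC 𝔓 S)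
    (hlim : ∀ P ∈ 𝔓, ∀ᵐ ω ∂P, Filter.Tendsto (fun n => x n ω) Filter.atTop (nhds (xl ω)))
    (hbdd : Quotient.mk (qsSetoid 𝔓) xl ∈ Linftyc 𝔓) :
    Quotient.mk (qsSetoid 𝔓) xl ∈ coneC 𝔓 S := by
  classical
  set A : ℕ → Set (Fin d → ℝ) :=
    fun n => {H | ∀ P ∈ 𝔓, x n ≤ᵐ[P] payoff S H} with hAdef
  have hAne : ∀ n, (A n).Nonempty := by
    intro n
    obtain ⟨-, H, hH⟩ := hmem n
    exact ⟨H, fun P hP => hH P hP⟩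
  have hAcl : ∀ n, IsClosed (A n) := fun n => setA_closed' 𝔓 S (x n)
  choose H hHA hHmin using fun n => exists_minOn_sq' (hAne n) (hAcl n)
  by_cases hb : ∃ R : ℝ, ∀ n, ‖H n‖ ≤ R
  · obtain ⟨R, hR⟩ := hb
    obtain ⟨Hinf, -, ψ, hψ, hψtend⟩ :=
      (isCompact_closedBall (0 : Fin d → ℝ) R).tendsto_subseq
        (fun n => mem_closedBall_zero_iff.2 (hR n))
    refine ⟨hbdd, Hinf, ?_⟩
    show ∀ P ∈ 𝔓, xl ≤ᵐ[P] payoff S Hinf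
    intro P hP
    have h2 : ∀ᵐ ω ∂P, ∀ n, x n ω ≤ payoff S (H n) ω := ae_all_iff.2 fun n => hHA n P hP
    filter_upwards [hlim P hP, h2] with ω hω1 hω2
    exact le_of_tendsto_of_tendsto' (hω1.comp hψ.tendsto_atTop)
      (((payoff_cont' S ω).tendsto Hinf).comp hψtend) (fun j => hω2 (ψ j))
  · push_neg at hb
    choose N hN using fun k : ℕ => hb ((k : ℝ) + 1)
    have hNnorm : Tendsto (fun k => ‖H (N k)‖) atTop atTop :=
      tendsto_atTop_mono (fun k => le_of_lt (lt_of_le_of_lt (by simp) (hN k)))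
        tendsto_natCast_atTop_atTop
    have hNtop : Tendsto N atTop atTop := by
      rw [tendsto_atTop_atTop]
      intro M
      refine ⟨(Finset.range M).sup (fun n => ⌈‖H n‖⌉₊), fun k hk => ?_⟩
      by_contra hlt
      push_neg at hlt
      have h1 : ‖H (N k)‖ ≤ (((Finset.range M).sup (fun n => ⌈‖H n‖⌉₊) : ℕ) : ℝ) :=
        le_trans (Nat.le_ceil _) (Nat.cast_le.2 (Finset.le_sup (f := fun n => ⌈‖H n‖⌉₊) (Finset.mem_range.2 hlt)))
      have h2 : (((Finset.range M).sup (fun n => ⌈‖H n‖⌉₊) : ℕ) : ℝ) ≤ (k : ℝ) :=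
        Nat.cast_le.2 hk
      linarith [hN k]
    set G : ℕ → (Fin d → ℝ) := fun k => ‖H (N k)‖⁻¹ • H (N k) with hG
    have hGnorm : ∀ k, ‖G k‖ = 1 := by
      intro k
      have hpos : 0 < ‖H (N k)‖ := lt_of_le_of_lt (by positivity) (hN k)
      simp only [hG, norm_smul, Real.norm_eq_abs, abs_inv, abs_norm]
      exact inv_mul_cancel₀ (ne_of_gt hpos)
    obtain ⟨Ginf, -, ψ, hψ, hψtend⟩ :=
      (isCompact_closedBall (0 : Fin d → ℝ) 1).tendsto_subseq
        (fun k => mem_closedBall_zero_iff.2 (hGnorm k).le)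
    have hGinfnorm : ‖Ginf‖ = 1 := by
      have ha : Tendsto (fun j => ‖(G ∘ ψ) j‖) atTop (nhds ‖Ginf‖) :=
        (continuous_norm.tendsto Ginf).comp hψtend
      have hb' : Tendsto (fun j => ‖(G ∘ ψ) j‖) atTop (nhds (1 : ℝ)) := by
        simp only [Function.comp, hGnorm]
        exact tendsto_const_nhds
      exact tendsto_nhds_unique ha hb'
    have hGinfne : Ginf ≠ 0 := by
      intro h
      rw [h, norm_zero] at hGinfnorm
      exact one_ne_zero hGinfnorm.symm
    have hq : 0 < ∑ i, (Ginf i)^2 := by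
      obtain ⟨i, hi⟩ : ∃ i, Ginf i ≠ 0 := by
        by_contra h
        push_neg at h
        exact hGinfne (funext h)
      exact Finset.sum_pos' (fun j _ => sq_nonneg _) ⟨i, Finset.mem_univ i, by positivity⟩
    have hpos0 : ∀ P ∈ 𝔓, ∀ᵐ ω ∂P, 0 ≤ payoff S Ginf ω := by
      intro P hP
      have h2 : ∀ᵐ ω ∂P, ∀ n, x n ω ≤ payoff S (H n) ω := ae_all_iff.2 fun n => hHA n P hP
      filter_upwards [hlim P hP, h2] with ω hω1 hω2
      have hinv : Tendsto (fun j => ‖H (N (ψ j))‖⁻¹) atTop (nhds 0) :=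
        tendsto_inv_atTop_zero.comp (hNnorm.comp hψ.tendsto_atTop)
      have hx : Tendsto (fun j => x (N (ψ j)) ω) atTop (nhds (xl ω)) :=
        hω1.comp (hNtop.comp hψ.tendsto_atTop)
      have hlow : Tendsto (fun j => ‖H (N (ψ j))‖⁻¹ * x (N (ψ j)) ω) atTop (nhds 0) := by
        simpa using hinv.mul hx
      have hup : Tendsto (fun j => payoff S (G (ψ j)) ω) atTop (nhds (payoff S Ginf ω)) :=
        ((payoff_cont' S ω).tendsto Ginf).comp hψtend
      refine le_of_tendsto_of_tendsto' hlow hup (fun j => ?_)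
      calc ‖H (N (ψ j))‖⁻¹ * x (N (ψ j)) ω
          ≤ ‖H (N (ψ j))‖⁻¹ * payoff S (H (N (ψ j))) ω :=
            mul_le_mul_of_nonneg_left (hω2 (N (ψ j))) (inv_nonneg.2 (norm_nonneg _))
        _ = payoff S (G (ψ j)) ω := by
            rw [hG]
            exact (payoff_smul' S _ _ ω).symm
    have hzero := hNA Ginf hpos0
    have hip : ∀ n, (∑ i, H n i * Ginf i) = 0 := by
      intro n
      set q := ∑ i, (Ginf i)^2 with hqdef
      set p := ∑ i, H n i * Ginf i with hpdef
      have key : (∑ i, (H n i)^2) ≤ ∑ i, ((H n - (p / q) • Ginf) i)^2 := by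
        apply hHmin n
        intro P hP
        filter_upwards [hHA n P hP, hzero P hP] with ω h1 h2
        rw [payoff_sub_smul', h2, mul_zero, sub_zero]
        exact h1
      have expand : (∑ i, ((H n - (p / q) • Ginf) i)^2)
          = (∑ i, (H n i)^2) - 2*(p/q)*p + (p/q)^2*q := by
        rw [hpdef, hqdef, Finset.mul_sum, Finset.mul_sum, ← Finset.sum_sub_distrib,
          ← Finset.sum_add_distrib]
        exact Finset.sum_congr rfl fun i _ => by
          simp only [Pi.sub_apply, Pi.smul_apply, smul_eq_mul]
          ring
      rw [expand] at key
      have hp2 : p^2 ≤ 0 := by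
        have hq' : (0:ℝ) < q := hq
        have hqne : q ≠ 0 := ne_of_gt hq'
        have h1 : 2*(p/q)*p = 2*(p^2/q) := by field_simp
        have h2 : (p/q)^2*q = p^2/q := by field_simp
        rw [h1, h2] at key
        have h3 : p^2/q ≤ 0 := by linarith
        calc p^2 = (p^2/q) * q := (div_mul_cancel₀ _ hqne).symm
          _ ≤ 0 := mul_nonpos_iff.mpr (Or.inr ⟨h3, hq'.le⟩)
      exact pow_eq_zero_iff two_ne_zero |>.mp (le_antisymm hp2 (sq_nonneg p))
    have hzero' : ∀ j, (∑ i, G (ψ j) i * Ginf i) = 0 := by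
      intro j
      rw [hG]
      have : (∑ i, (‖H (N (ψ j))‖⁻¹ • H (N (ψ j))) i * Ginf i)
          = ‖H (N (ψ j))‖⁻¹ * ∑ i, H (N (ψ j)) i * Ginf i := by
        rw [Finset.mul_sum]
        exact Finset.sum_congr rfl fun i _ => by
          simp only [Pi.smul_apply, smul_eq_mul]
          ring
      rw [this, hip, mul_zero]
    have hcont : Tendsto (fun j => ∑ i, G (ψ j) i * Ginf i) atTop (nhds (∑ i, Ginf i * Ginf i)) := by
      have hc : Continuous fun v : Fin d → ℝ => ∑ i, v i * Ginf i :=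
        continuous_finset_sum _ (fun i _ => (continuous_apply i).mul continuous_const)
      exact (hc.tendsto Ginf).comp hψtend
    have hfin : (∑ i, Ginf i * Ginf i) = 0 := by
      have h0 : Tendsto (fun j => ∑ i, G (ψ j) i * Ginf i) atTop (nhds 0) := by
        simp only [hzero']
        exact tendsto_const_nhds
      exact tendsto_nhds_unique hcont h0
    refine absurd hfin (ne_of_gt ?_)
    calc (0:ℝ) < ∑ i, (Ginf i)^2 := hq
      _ = ∑ i, Ginf i * Ginf i := Finset.sum_congr rfl fun i _ => by ring
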